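/- Consider the lower-bound construction with integers u > d ≥ 1 and real 0 < α < 1. Then er_{D_h}(h) = (1-α)·d/u, and for every g ∈ H one has er_{D_h}(g) ≥ (1-α)·d/u, with equality if and only if g = h; in particular h is the unique minimizer of er_{D_h} over H. -/

import Mathlib

open MeasureTheory

abbrev Label : Type := ↥({-1, 1} : Finset ℤ)

def lneg : Label := ⟨-1, by decide⟩
def lpos : Label := ⟨1, by decide⟩

noncomputable def erD {X : Type*} [MeasurableSpace X]
    (D : Measure (X × Label)) (h : X → Label) : ℝ :=
  (D {p | h p.1 ≠ p.2}).toReal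

/-- The distribution `D_h` of the lower-bound construction: every example is labeled `1`;
a point `i` with `h i = -1` has probability `(1-α)/u`, and a point `i` with `h i = 1`
has probability `(1-(1-α)d/u)/(u-d)`. -/
noncomputable def Dh (u d : ℕ) (α : ℝ) (h : Fin u → Label) : Measure (Fin u × Label) :=
  Measure.sum fun i : Fin u =>
    (ENNReal.ofReal (if h i = lneg then (1 - α) / (u : ℝ)
        else (1 - (1 - α) * (d : ℝ) / (u : ℝ)) / ((u : ℝ) - (d : ℝ)))) •
      Measure.dirac (i, lpos)

/-- Membership in the hypothesis class of the lower-bound construction: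
`h` takes the value `-1` on exactly `d` points. -/
def memH (u d : ℕ) (h : Fin u → Label) : Prop :=
  (Finset.univ.filter fun i => h i = lneg).card = d

lemma ne_lpos_iff : ∀ x : Label, x ≠ lpos ↔ x = lneg := by decide
lemma ne_lneg_iff : ∀ x : Label, x ≠ lneg ↔ x = lpos := by decide

lemma erD_Dh (u d : ℕ) (α : ℝ) (h g : Fin u → Label)
    (hdu : d < u) (hα0 : 0 < α) (hα1 : α < 1) :
    erD (Dh u d α h) g =
      ∑ i ∈ Finset.univ.filter (fun i => g i = lneg),
        (if h i = lneg then (1 - α) / (u : ℝ)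
          else (1 - (1 - α) * (d : ℝ) / (u : ℝ)) / ((u : ℝ) - (d : ℝ))) := by
  classical
  have hu0 : (0:ℝ) < u := by exact_mod_cast Nat.lt_of_le_of_lt (Nat.zero_le d) hdu
  have hdu' : (d:ℝ) < u := by exact_mod_cast hdu
  set c : Fin u → ℝ := fun i => (if h i = lneg then (1 - α) / (u : ℝ)
      else (1 - (1 - α) * (d : ℝ) / (u : ℝ)) / ((u : ℝ) - (d : ℝ))) with hc
  have hcpos : ∀ i, 0 ≤ c i := by
    intro i
    simp only [hc]
    split
    · exact div_nonneg (by linarith) hu0.le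
    · apply div_nonneg _ (by linarith)
      rw [sub_nonneg, div_le_one hu0]
      nlinarith [Nat.cast_nonneg (α := ℝ) d]
  set s : Set (Fin u × Label) := {p | g p.1 ≠ p.2} with hs
  have hms : MeasurableSet s := (Set.toFinite s).measurableSet
  have h1 : Dh u d α h s = ∑ i : Fin u, ENNReal.ofReal (if g i = lneg then c i else 0) := by
    rw [Dh, Measure.sum_apply _ hms, tsum_fintype]
    refine Finset.sum_congr rfl fun i _ => ?_
    rw [Measure.smul_apply, smul_eq_mul, Measure.dirac_apply' _ hms]
    have hmem : (i, lpos) ∈ s ↔ g i = lneg := by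
      simp only [hs, Set.mem_setOf_eq]; exact ne_lpos_iff (g i)
    by_cases hgi : g i = lneg
    · rw [Set.indicator_of_mem (hmem.mpr hgi), if_pos hgi]
      simp [hc]
    · rw [Set.indicator_of_notMem (fun hm => hgi (hmem.mp hm)), if_neg hgi]
      simp
  have key : ∀ i : Fin u, 0 ≤ (if g i = lneg then c i else 0) := fun i => by
    split
    · exact hcpos i
    · exact le_refl 0
  rw [erD, h1, ← ENNReal.ofReal_sum_of_nonneg (fun i _ => key i),
    ENNReal.toReal_ofReal (Finset.sum_nonneg fun i _ => key i),
    Finset.sum_filter]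

/-- under `D_h`, the hypothesis `h` has error exactly `(1-α)d/u`, and it is
the unique minimizer of the error over the class `H`. -/
theorem h_unique_minimizer (u d : ℕ) (α : ℝ) (h : Fin u → Label)
    (hd : 1 ≤ d) (hdu : d < u) (hα0 : 0 < α) (hα1 : α < 1) (hh : memH u d h) :
    erD (Dh u d α h) h = (1 - α) * (d : ℝ) / (u : ℝ) ∧
      ∀ g : Fin u → Label, memH u d g →
        (1 - α) * (d : ℝ) / (u : ℝ) ≤ erD (Dh u d α h) g ∧
          (erD (Dh u d α h) g = (1 - α) * (d : ℝ) / (u : ℝ) ↔ g = h) := by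
    classical
  have hu0 : (0:ℝ) < u := by exact_mod_cast Nat.lt_of_le_of_lt (Nat.zero_le d) hdu
  have hdu' : (d:ℝ) < u := by exact_mod_cast hdu
  set a : ℝ := (1 - α) / (u : ℝ) with ha
  set b : ℝ := (1 - (1 - α) * (d : ℝ) / (u : ℝ)) / ((u : ℝ) - (d : ℝ)) with hb
  have hune : (u:ℝ) ≠ 0 := ne_of_gt hu0
  have hudne : (u:ℝ) - d ≠ 0 := ne_of_gt (by linarith)
  have hba : b - a = α / ((u:ℝ) - d) := by
    rw [ha, hb]
    field_simp
    ring
  have hba' : 0 < b - a := by rw [hba]; exact div_pos hα0 (by linarith)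
  set A : Finset (Fin u) := Finset.univ.filter (fun i => h i = lneg) with hA
  -- general error formula for g in the class
  have main : ∀ g : Fin u → Label, memH u d g →
      erD (Dh u d α h) g = (1 - α) * (d : ℝ) / (u : ℝ)
        + ((Finset.univ.filter (fun i => g i = lneg)).filter (fun i => ¬ h i = lneg)).card * (b - a) := by
    intro g hg
    set B : Finset (Fin u) := Finset.univ.filter (fun i => g i = lneg) with hB
    rw [erD_Dh u d α h g hdu hα0 hα1]
    have hsplit : ∑ i ∈ B, (if h i = lneg then a else b)
        = ∑ i ∈ B.filter (fun i => h i = lneg), (if h i = lneg then a else b)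
          + ∑ i ∈ B.filter (fun i => ¬ h i = lneg), (if h i = lneg then a else b) := by
      rw [Finset.sum_filter_add_sum_filter_not]
    have h1 : ∑ i ∈ B.filter (fun i => h i = lneg), (if h i = lneg then a else b)
        = (B.filter (fun i => h i = lneg)).card * a := by
      rw [Finset.sum_congr rfl (fun i hi => if_pos (Finset.mem_filter.mp hi).2),
        Finset.sum_const, nsmul_eq_mul]
    have h2 : ∑ i ∈ B.filter (fun i => ¬ h i = lneg), (if h i = lneg then a else b)
        = (B.filter (fun i => ¬ h i = lneg)).card * b := by
      rw [Finset.sum_congr rfl (fun i hi => if_neg (Finset.mem_filter.mp hi).2),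
        Finset.sum_const, nsmul_eq_mul]
    have hcard : (B.filter (fun i => h i = lneg)).card
        + (B.filter (fun i => ¬ h i = lneg)).card = d := by
      rw [Finset.card_filter_add_card_filter_not]
      exact hg
    have hda : (1 - α) * (d : ℝ) / (u : ℝ) = (d : ℝ) * a := by
      rw [ha]; field_simp
    rw [hsplit, h1, h2, hda]
    have hk : ((B.filter (fun i => h i = lneg)).card : ℝ)
        = (d : ℝ) - (B.filter (fun i => ¬ h i = lneg)).card := by
      have := hcard
      push_cast [← this]
      ring
    rw [hk]; ring
  -- equality case characterization
  have hchar : ∀ g : Fin u → Label, memH u d g →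
      (((Finset.univ.filter (fun i => g i = lneg)).filter (fun i => ¬ h i = lneg)).card = 0 ↔ g = h) := by
    intro g hg
    constructor
    · intro h0
      have hsub : Finset.univ.filter (fun i => g i = lneg) ⊆ A := by
        intro i hi
        by_contra hiA
        have : i ∈ (Finset.univ.filter (fun i => g i = lneg)).filter (fun i => ¬ h i = lneg) := by
          refine Finset.mem_filter.mpr ⟨hi, fun hhi => hiA ?_⟩
          exact Finset.mem_filter.mpr ⟨Finset.mem_univ i, hhi⟩
        rw [Finset.card_eq_zero] at h0
        simp [h0] at this
      have heq : Finset.univ.filter (fun i => g i = lneg) = A :=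
        Finset.eq_of_subset_of_card_le hsub (by rw [hg, hA, hh])
      funext i
      by_cases hgi : g i = lneg
      · have : i ∈ A := heq ▸ Finset.mem_filter.mpr ⟨Finset.mem_univ i, hgi⟩
        rw [hgi, (Finset.mem_filter.mp this).2]
      · have hiA : i ∉ A := by
          rw [← heq]
          simp [hgi]
        have hhi : ¬ h i = lneg := fun hhi => hiA (Finset.mem_filter.mpr ⟨Finset.mem_univ i, hhi⟩)
        rw [(ne_lneg_iff (g i)).mp hgi, (ne_lneg_iff (h i)).mp hhi]
    · intro hgh
      subst hgh
      rw [Finset.card_eq_zero, Finset.filter_filter]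
      apply Finset.filter_false_of_mem
      intro i _
      exact fun ⟨h1, h2⟩ => h2 h1
  have herrh : erD (Dh u d α h) h = (1 - α) * (d : ℝ) / (u : ℝ) := by
    rw [main h hh, (hchar h hh).mpr rfl]
    simp
  refine ⟨herrh, fun g hg => ?_⟩
  have hm := main g hg
  set m : ℕ := ((Finset.univ.filter (fun i => g i = lneg)).filter (fun i => ¬ h i = lneg)).card with hmdef
  constructor
  · rw [hm]
    nlinarith [Nat.cast_nonneg (α := ℝ) m, hba']
  · rw [hm, ← hchar g hg]
    constructor
    · intro he
      have : (m : ℝ) * (b - a) = 0 := by linarith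
      rcases mul_eq_zero.mp this with h0 | h0
      · exact_mod_cast h0
      · linarith
    · intro h0
      have hm0 : m = 0 := by rw [hmdef]; exact h0
      rw [hm0]
      simp
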